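/- arXiv:2510.15573 — 4 statements merged into one kernel-verified Lean document; each statement's English description precedes it below -/
import Mathlib

section
/- Let H be a real inner product space, K ⊆ H, F₁, F₂ : H → H, and μ > 0, and suppose F₁ is μ-strongly monotone on K. If s₁ ∈ K is a solution of the variational inequality VI(F₁, K) and s₂ ∈ K is a solution of the variational inequality VI(F₂, K), then ‖s₁ − s₂‖ ≤ (1/μ) ‖F₁(s₂) − F₂(s₂)‖. -/
open scoped RealInnerProductSpace

/-- `x` is a solution of the variational inequality `VI(F, K)`:
`x ∈ K` and `⟪F x, s − x⟫ ≥ 0` for all `s ∈ K`. -/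
def VISol {H : Type*} [NormedAddCommGroup H] [InnerProductSpace ℝ H]
    (F : H → H) (K : Set H) (x : H) : Prop :=
  x ∈ K ∧ ∀ s ∈ K, 0 ≤ ⟪F x, s - x⟫

/-- `F` is `μ`-strongly monotone on `K`. -/
def StronglyMonotoneOn {H : Type*} [NormedAddCommGroup H] [InnerProductSpace ℝ H]
    (F : H → H) (K : Set H) (μ : ℝ) : Prop :=
  ∀ x ∈ K, ∀ y ∈ K, μ * ‖x - y‖ ^ 2 ≤ ⟪F x - F y, x - y⟫

/-- Perturbation bound for variational inequalities: if `F₁` is `μ`-strongly monotone on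
`K`, `s₁` solves `VI(F₁, K)` and `s₂` solves `VI(F₂, K)`, then
`‖s₁ − s₂‖ ≤ (1/μ) ‖F₁(s₂) − F₂(s₂)‖`. -/
theorem VISol_perturbation {H : Type*} [NormedAddCommGroup H] [InnerProductSpace ℝ H]
    (K : Set H) (F₁ F₂ : H → H) (μ : ℝ) (hμ : 0 < μ)
    (hmono : StronglyMonotoneOn F₁ K μ)
    (s₁ s₂ : H) (h₁ : VISol F₁ K s₁) (h₂ : VISol F₂ K s₂) :
    ‖s₁ - s₂‖ ≤ (1 / μ) * ‖F₁ s₂ - F₂ s₂‖ := by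
  obtain ⟨hs₁K, hvi₁⟩ := h₁
  obtain ⟨hs₂K, hvi₂⟩ := h₂
  have hA := hmono s₁ hs₁K s₂ hs₂K
  have hB := hvi₁ s₂ hs₂K
  have hC := hvi₂ s₁ hs₁K
  have key : μ * ‖s₁ - s₂‖ ^ 2 ≤ ⟪F₁ s₂ - F₂ s₂, s₂ - s₁⟫ := by
    have e1 : ⟪F₁ s₁ - F₁ s₂, s₁ - s₂⟫
        = -⟪F₁ s₁, s₂ - s₁⟫ - ⟪F₂ s₂, s₁ - s₂⟫ + ⟪F₁ s₂ - F₂ s₂, s₂ - s₁⟫ := by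
      simp [inner_sub_left, inner_sub_right]; ring
    rw [e1] at hA
    linarith
  have hcs : ⟪F₁ s₂ - F₂ s₂, s₂ - s₁⟫ ≤ ‖F₁ s₂ - F₂ s₂‖ * ‖s₁ - s₂‖ := by
    have := real_inner_le_norm (F₁ s₂ - F₂ s₂) (s₂ - s₁)
    rwa [norm_sub_rev s₂ s₁] at this
  rcases eq_or_lt_of_le (norm_nonneg (s₁ - s₂)) with h0 | h0
  · rw [← h0]
    positivity
  · have h : μ * ‖s₁ - s₂‖ ^ 2 ≤ ‖F₁ s₂ - F₂ s₂‖ * ‖s₁ - s₂‖ := le_trans key hcs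
    rw [div_mul_eq_mul_div, le_div_iff₀ hμ]
    nlinarith
end

section
/- Let m ∈ ℕ, let r ∈ ℝ^m (Euclidean space with the standard inner product), let θ_min > 0 and R ≥ 0, and let K ⊆ ℝ^m be a set contained in the closed ball of radius R centered at r. Let d, d' ∈ ℝ^m have all entries ≥ θ_min. If s ∈ K solves the variational inequality VI(F_{d,r}, K) and s' ∈ K solves VI(F_{d',r}, K), then ‖s − s'‖ ≤ (R/θ_min) ‖d − d'‖. -/
open scoped RealInnerProductSpace

/-- The diagonal-affine operator `F_{d,r}(x)_i = d_i (x_i - r_i)`. -/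
noncomputable def Fdr {m : ℕ} (d r : EuclideanSpace ℝ (Fin m)) :
    EuclideanSpace ℝ (Fin m) → EuclideanSpace ℝ (Fin m) :=
  fun x => WithLp.toLp 2 (fun i => d i * (x i - r i))

/-- If `K` is contained in the closed ball of radius `R` about `r` and all entries of
`d, d'` are at least `θmin > 0`, then the variational-inequality solutions for
`F_{d,r}` and `F_{d',r}` over `K` satisfy `‖s − s'‖ ≤ (R/θmin) ‖d − d'‖`. -/
theorem Fdr_VISol_param_bound {m : ℕ} (r : EuclideanSpace ℝ (Fin m))
    (θmin R : ℝ) (hθ : 0 < θmin) (hR : 0 ≤ R)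
    (K : Set (EuclideanSpace ℝ (Fin m))) (hK : K ⊆ Metric.closedBall r R)
    (d d' : EuclideanSpace ℝ (Fin m))
    (hd : ∀ i, θmin ≤ d i) (hd' : ∀ i, θmin ≤ d' i)
    (s s' : EuclideanSpace ℝ (Fin m))
    (hs : VISol (Fdr d r) K s) (hs' : VISol (Fdr d' r) K s') :
    ‖s - s'‖ ≤ (R / θmin) * ‖d - d'‖ := by
  have h1 : 0 ≤ ⟪Fdr d r s, s' - s⟫ := hs.2 s' hs'.1
  have h2 : 0 ≤ ⟪Fdr d' r s', s - s'⟫ := hs'.2 s hs.1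
  -- monotonicity: θmin ‖s - s'‖² ≤ ⟪Fdr d r s - Fdr d r s', s - s'⟫
  have hmono : θmin * ‖s - s'‖ ^ 2 ≤ ⟪Fdr d r s - Fdr d r s', s - s'⟫ := by
    have hnorm : ‖s - s'‖ ^ 2 = ∑ i, (s i - s' i) ^ 2 := by
      rw [← real_inner_self_eq_norm_sq, PiLp.inner_apply]
      simp [RCLike.inner_apply, PiLp.sub_apply, sq]
    rw [PiLp.inner_apply, hnorm, Finset.mul_sum]
    apply Finset.sum_le_sum
    intro i _
    simp only [RCLike.inner_apply, conj_trivial, PiLp.sub_apply, Fdr]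
    have : d i * (s i - r i) - d i * (s' i - r i) = d i * (s i - s' i) := by ring
    rw [this]
    have h := mul_le_mul_of_nonneg_right (hd i) (sq_nonneg (s i - s' i))
    calc θmin * (s i - s' i) ^ 2 ≤ d i * (s i - s' i) ^ 2 := h
      _ = d i * (s i - s' i) * (s i - s' i) := by ring
      _ = (s i - s' i) * (d i * (s i - s' i)) := by ring
  -- the cross term ≤ 0
  have hcross : ⟪Fdr d r s - Fdr d' r s', s - s'⟫ ≤ 0 := by
    rw [inner_sub_left]
    have : ⟪Fdr d r s, s - s'⟫ = -⟪Fdr d r s, s' - s⟫ := by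
      rw [← inner_neg_right]; congr 1; abel
    rw [this]
    linarith
  -- norm bound on the parameter perturbation
  have hs'ball : ‖s' - r‖ ≤ R := by
    have := hK hs'.1
    rwa [Metric.mem_closedBall, dist_eq_norm] at this
  have hpert : ‖Fdr d' r s' - Fdr d r s'‖ ≤ R * ‖d - d'‖ := by
    have hsq : ‖Fdr d' r s' - Fdr d r s'‖ ^ 2 ≤ (R * ‖d - d'‖) ^ 2 := by
      have lhs_eq : ‖Fdr d' r s' - Fdr d r s'‖ ^ 2
          = ∑ i, ((d' i - d i) * (s' i - r i)) ^ 2 := by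
        rw [← real_inner_self_eq_norm_sq, PiLp.inner_apply]
        apply Finset.sum_congr rfl
        intro i _
        simp only [RCLike.inner_apply, conj_trivial, PiLp.sub_apply, Fdr]
        ring
      have rhs_eq : (R * ‖d - d'‖) ^ 2 = ∑ i, R ^ 2 * (d i - d' i) ^ 2 := by
        have : ‖d - d'‖ ^ 2 = ∑ i, (d i - d' i) ^ 2 := by
          rw [← real_inner_self_eq_norm_sq, PiLp.inner_apply]
          simp [RCLike.inner_apply, PiLp.sub_apply, sq]
        rw [mul_pow, this, Finset.mul_sum]
      rw [lhs_eq, rhs_eq]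
      apply Finset.sum_le_sum
      intro i _
      have hi : (s' i - r i) ^ 2 ≤ R ^ 2 := by
        have h1 : |s' i - r i| ≤ ‖s' - r‖ := by
          have := EuclideanSpace.norm_eq (s' - r)
          calc |s' i - r i| = Real.sqrt ((s' i - r i) ^ 2) := by
                rw [Real.sqrt_sq_eq_abs]
            _ ≤ ‖s' - r‖ := by
                rw [this]
                apply Real.sqrt_le_sqrt
                have : (s' i - r i) ^ 2 = ‖(s' - r) i‖ ^ 2 := by
                  simp [PiLp.sub_apply, sq_abs]
                rw [this]
                exact Finset.single_le_sum (f := fun j => ‖(s' - r) j‖ ^ 2)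
                  (fun j _ => sq_nonneg _) (Finset.mem_univ i)
        have h2 : |s' i - r i| ≤ R := h1.trans hs'ball
        calc (s' i - r i) ^ 2 = |s' i - r i| ^ 2 := (sq_abs _).symm
          _ ≤ R ^ 2 := by apply sq_le_sq' <;> nlinarith [abs_nonneg (s' i - r i)]
      calc ((d' i - d i) * (s' i - r i)) ^ 2 = (s' i - r i) ^ 2 * (d i - d' i) ^ 2 := by ring
        _ ≤ R ^ 2 * (d i - d' i) ^ 2 :=
            mul_le_mul_of_nonneg_right hi (sq_nonneg _)
    have h0 : 0 ≤ R * ‖d - d'‖ := mul_nonneg hR (norm_nonneg _)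
    nlinarith [norm_nonneg (Fdr d' r s' - Fdr d r s')]
  -- combine
  have key : θmin * ‖s - s'‖ ^ 2 ≤ R * ‖d - d'‖ * ‖s - s'‖ := by
    have hsplit : ⟪Fdr d r s - Fdr d r s', s - s'⟫
        = ⟪Fdr d r s - Fdr d' r s', s - s'⟫ + ⟪Fdr d' r s' - Fdr d r s', s - s'⟫ := by
      rw [← inner_add_left]; congr 1; abel
    have hcs : ⟪Fdr d' r s' - Fdr d r s', s - s'⟫ ≤ R * ‖d - d'‖ * ‖s - s'‖ := by
      calc ⟪Fdr d' r s' - Fdr d r s', s - s'⟫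
          ≤ ‖Fdr d' r s' - Fdr d r s'‖ * ‖s - s'‖ := real_inner_le_norm _ _
        _ ≤ R * ‖d - d'‖ * ‖s - s'‖ :=
            mul_le_mul_of_nonneg_right hpert (norm_nonneg _)
    linarith [hmono, hcross, hsplit ▸ hmono]
  rcases eq_or_lt_of_le (norm_nonneg (s - s')) with h0 | h0
  · rw [← h0]
    positivity
  · rw [div_mul_eq_mul_div, le_div_iff₀ hθ]
    have := mul_le_mul_of_nonneg_left key (le_of_lt hθ)
    nlinarith
end

section
/- Let n, m ∈ ℕ, let E = Π_{i ∈ Fin n} ℝ^m carry the product (L²) inner product, let K ⊆ E be nonempty, closed, and convex, and for each i let d_i, r_i ∈ ℝ^m with θ_min ≤ (d_i)_j ≤ θ_max for all j, where 0 < θ_min ≤ θ_max. Define the pseudo-gradient F : E → E blockwise by F(s)_i = d_i ∘ (s_i − r_i). Then: (1) there exists a unique s* ∈ K with ⟨F(s*), s − s*⟩ ≥ 0 for all s ∈ K (a variational equilibrium); and (2) this s* is a generalized Nash equilibrium of the game with costs J_i(s_i) = (1/2) Σ_j (d_i)_j ((s_i)_j − (r_i)_j)², i.e., for every i and every t ∈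 ℝ^m such that replacing the i-th component of s* by t yields a profile in K, J_i(s*_i) ≤ J_i(t). -/
open scoped RealInnerProductSpace

noncomputable def Tlin (n m : ℕ) (c : Fin n → Fin m → ℝ) :
    PiLp 2 (fun _ : Fin n => EuclideanSpace ℝ (Fin m)) →ₗ[ℝ]
    PiLp 2 (fun _ : Fin n => EuclideanSpace ℝ (Fin m)) where
  toFun x := WithLp.toLp 2 (fun i => WithLp.toLp 2 (fun j => c i j * x i j))
  map_add' x y := by
    ext i j
    show c i j * (x i j + y i j) = c i j * x i j + c i j * y i j
    ring
  map_smul' a x := by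
    ext i j
    show c i j * (a * x i j) = a * (c i j * x i j)
    ring

/-- Existence and uniqueness of the variational equilibrium of the trajectory-planning
game with quadratic tracking costs and diagonal weights bounded in `[θmin, θmax]`,
`0 < θmin ≤ θmax`, over a nonempty closed convex coupled constraint set `K`; moreover
this variational equilibrium is a generalized Nash equilibrium of the game. -/
theorem trajectoryGame_VE_exists_unique_and_GNE (n m : ℕ)
    (K : Set (PiLp 2 (fun _ : Fin n => EuclideanSpace ℝ (Fin m))))
    (hKne : K.Nonempty) (hKcl : IsClosed K) (hKconv : Convex ℝ K)
    (θmin θmax : ℝ) (hθmin : 0 < θmin) (hθ : θmin ≤ θmax)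
    (d r : Fin n → EuclideanSpace ℝ (Fin m))
    (hd : ∀ i j, θmin ≤ d i j ∧ d i j ≤ θmax)
    (F : PiLp 2 (fun _ : Fin n => EuclideanSpace ℝ (Fin m)) →
         PiLp 2 (fun _ : Fin n => EuclideanSpace ℝ (Fin m)))
    (hF : ∀ s i j, F s i j = d i j * (s i j - r i j))
    (J : Fin n → EuclideanSpace ℝ (Fin m) → ℝ)
    (hJ : ∀ i x, J i x = (1 / 2) * ∑ j, d i j * (x j - r i j) ^ 2) :
    ∃ sstar ∈ K,
      (∀ s ∈ K, 0 ≤ ⟪F sstar, s - sstar⟫) ∧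
      (∀ s' ∈ K, (∀ s ∈ K, 0 ≤ ⟪F s', s - s'⟫) → s' = sstar) ∧
      (∀ (i : Fin n) (t : EuclideanSpace ℝ (Fin m)),
        WithLp.toLp 2 (Function.update sstar i t) ∈ K → J i (sstar i) ≤ J i t) := by
  have hdpos : ∀ i j, 0 < d i j := fun i j => lt_of_lt_of_le hθmin (hd i j).1
  set c : Fin n → Fin m → ℝ := fun i j => Real.sqrt (d i j) with hc
  have hcpos : ∀ i j, 0 < c i j := fun i j => Real.sqrt_pos.2 (hdpos i j)
  have hcc : ∀ i j, c i j * c i j = d i j := fun i j =>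
    Real.mul_self_sqrt (le_of_lt (hdpos i j))
  set T := Tlin n m c with hT
  set T' := Tlin n m (fun i j => (c i j)⁻¹) with hT'
  have hT'T : ∀ x, T' (T x) = x := by
    intro x; ext i j
    exact inv_mul_cancel_left₀ (ne_of_gt (hcpos i j)) _
  have hTT' : ∀ x, T (T' x) = x := by
    intro x; ext i j
    exact mul_inv_cancel_left₀ (ne_of_gt (hcpos i j)) _
  have hTK : T '' K = T' ⁻¹' K := by
    ext x
    constructor
    · rintro ⟨k, hk, rfl⟩
      simpa [Set.mem_preimage, hT'T] using hk
    · intro hx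
      exact ⟨T' x, hx, hTT' x⟩
  have hT'cont : Continuous T' := by
    show Continuous (fun x : PiLp 2 (fun _ : Fin n => EuclideanSpace ℝ (Fin m)) => (WithLp.toLp 2 (fun i => WithLp.toLp 2 (fun j => (c i j)⁻¹ * x i j)) :
      PiLp 2 (fun _ : Fin n => EuclideanSpace ℝ (Fin m))))
    fun_prop
  have hKimcl : IsClosed (T '' K) := hTK ▸ hKcl.preimage hT'cont
  have hKimconv : Convex ℝ (T '' K) := hKconv.linear_image T
  have hKimne : (T '' K).Nonempty := hKne.image T
  obtain ⟨v, hvK, hvmin⟩ := exists_norm_eq_iInf_of_complete_convex hKimne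
    hKimcl.isComplete hKimconv (T (WithLp.toLp 2 r))
  have hvchar := (norm_eq_iInf_iff_real_inner_le_zero hKimconv hvK).1 hvmin
  obtain ⟨sstar, hsK, rfl⟩ := hvK
  have hinner : ∀ x y : PiLp 2 (fun _ : Fin n => EuclideanSpace ℝ (Fin m)),
      ⟪x, y⟫ = ∑ i, ∑ j, x i j * y i j := by
    intro x y; simp [PiLp.inner_apply]
    exact Finset.sum_congr rfl fun _ _ => Finset.sum_congr rfl fun _ _ => mul_comm _ _
  have hTsub : ∀ x y i j,
      ((T x : PiLp 2 (fun _ : Fin n => EuclideanSpace ℝ (Fin m))) - T y) i j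
        = c i j * (x i j - y i j) := by
    intro x y i j
    show c i j * x i j - c i j * y i j = _
    ring
  have hsub : ∀ (x y : PiLp 2 (fun _ : Fin n => EuclideanSpace ℝ (Fin m))) i j,
      (x - y) i j = x i j - y i j := fun _ _ _ _ => rfl
  have hVI : ∀ s ∈ K, 0 ≤ ⟪F sstar, s - sstar⟫ := by
    intro s hs
    have h1 := hvchar (T s) ⟨s, hs, rfl⟩
    rw [hinner] at h1 ⊢
    have key : (∑ i, ∑ j, F sstar i j * (s - sstar) i j)
        = -∑ i, ∑ j, ((T (WithLp.toLp 2 r) : _) - T sstar) i j * ((T s : _) - T sstar) i j := by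
      rw [← Finset.sum_neg_distrib]
      refine Finset.sum_congr rfl fun i _ => ?_
      rw [← Finset.sum_neg_distrib]
      refine Finset.sum_congr rfl fun j _ => ?_
      rw [hF, hsub, hTsub, hTsub, ← hcc i j]
      ring
    rw [key]
    linarith
  refine ⟨sstar, hsK, hVI, ?_, ?_⟩
  · -- uniqueness
    intro s' hs'K hs'VI
    have h1 := hs'VI sstar hsK
    have h2 := hVI s' hs'K
    rw [hinner] at h1 h2
    have hsum : (∑ i, ∑ j, F s' i j * (sstar - s') i j)
          + (∑ i, ∑ j, F sstar i j * (s' - sstar) i j)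
        = -∑ i, ∑ j, d i j * (sstar i j - s' i j) ^ 2 := by
      rw [← Finset.sum_add_distrib, ← Finset.sum_neg_distrib]
      refine Finset.sum_congr rfl fun i _ => ?_
      rw [← Finset.sum_add_distrib, ← Finset.sum_neg_distrib]
      refine Finset.sum_congr rfl fun j _ => ?_
      rw [hF, hF, hsub, hsub]
      ring
    have hzero : (∑ i, ∑ j, d i j * (sstar i j - s' i j) ^ 2) = 0 := by
      have hnn : 0 ≤ ∑ i, ∑ j, d i j * (sstar i j - s' i j) ^ 2 :=
        Finset.sum_nonneg fun i _ => Finset.sum_nonneg fun j _ =>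
          mul_nonneg (le_of_lt (hdpos i j)) (sq_nonneg _)
      linarith
    ext i j
    have hterm : ∀ i ∈ Finset.univ, (∑ j, d i j * (sstar i j - s' i j) ^ 2) = 0 := by
      rw [← Finset.sum_eq_zero_iff_of_nonneg
        (fun i _ => Finset.sum_nonneg fun j _ =>
          mul_nonneg (le_of_lt (hdpos i j)) (sq_nonneg _))]
      exact hzero
    have hterm2 : ∀ j ∈ Finset.univ, d i j * (sstar i j - s' i j) ^ 2 = 0 := by
      rw [← Finset.sum_eq_zero_iff_of_nonneg
        (fun j _ => mul_nonneg (le_of_lt (hdpos i j)) (sq_nonneg _))]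
      exact hterm i (Finset.mem_univ i)
    have := hterm2 j (Finset.mem_univ j)
    have hsq : (sstar i j - s' i j) ^ 2 = 0 := by
      rcases mul_eq_zero.1 this with h | h
      · exact absurd h (ne_of_gt (hdpos i j))
      · exact h
    have := pow_eq_zero_iff (n := 2) (by norm_num) |>.1 hsq
    linarith [this]
  · -- GNE
    intro i t hup
    obtain ⟨u, hu⟩ : ∃ u : PiLp 2 (fun _ : Fin n => EuclideanSpace ℝ (Fin m)),
        u = WithLp.toLp 2 (Function.update sstar i t) := ⟨_, rfl⟩
    rw [← hu] at hup
    have h1 := hVI u hup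
    rw [hinner] at h1
    have hui : ∀ j, u i j = t j := by intro j; rw [hu]; simp
    have hukj : ∀ k, k ≠ i → ∀ j, u k j = sstar k j := by
      intro k hk j; rw [hu, PiLp.toLp_apply, Function.update_of_ne hk]
    have hkey : (∑ k, ∑ j, F sstar k j * (u - sstar) k j)
        = ∑ j, d i j * (sstar i j - r i j) * (t j - sstar i j) := by
      rw [Finset.sum_eq_single i]
      · refine Finset.sum_congr rfl fun j _ => ?_
        rw [hF, hsub, hui]
      · intro k _ hk
        refine Finset.sum_eq_zero fun j _ => ?_
        rw [hsub, hukj k hk]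
        simp
      · intro h; exact absurd (Finset.mem_univ i) h
    rw [hkey] at h1
    rw [hJ, hJ]
    have hstep : ∀ j ∈ Finset.univ,
        d i j * (sstar i j - r i j) ^ 2
          ≤ d i j * (t j - r i j) ^ 2 - 2 * (d i j * (sstar i j - r i j) * (t j - sstar i j)) := by
      intro j _
      nlinarith [mul_nonneg (le_of_lt (hdpos i j)) (sq_nonneg (t j - sstar i j))]
    have hsums := Finset.sum_le_sum hstep
    rw [Finset.sum_sub_distrib] at hsums
    have h2 : (∑ j, 2 * (d i j * (sstar i j - r i j) * (t j - sstar i j)))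
        = 2 * ∑ j, d i j * (sstar i j - r i j) * (t j - sstar i j) := by
      rw [Finset.mul_sum]
    rw [h2] at hsums
    linarith
end

section
/- Let m ∈ ℕ, r ∈ ℝ^m, 0 < θ_min, R ≥ 0, let K ⊆ ℝ^m be a nonempty set contained in the closed ball of radius R centered at r, and let d_true, d_ave ∈ ℝ^m have all entries ≥ θ_min with ‖d_true − d_ave‖ ≤ ε_c. Let s* ∈ K solve the variational inequality VI(F_{d_true,r}, K) and let s' ∈ K solve VI(F_{d_ave,r}, K). Further let H₀ be a metric space, S₀ : ℝ^m → (nonempty bounded subsets of H₀) a set-valued feasible-set map satisfying hausdorffDist(S₀(p), S₀(p')) ≤ L_S ‖p − p'‖ for all p, p', and let J₀ : H₀ → ℝ be γ-Lipschitz. If s₀* ∈ S₀(s') attains f(s₀*) = inf{ J₀(s) : s ∈ S₀(s') }, then for every s₀ ∈ S₀(s*): J₀(s₀*) ≤ J₀(s₀) + γ L_S (R/θ_min) ε_c. That is, the human-driven vehicle's subjectively optimal strategy is an L ε_c-approximate best response to the CAVs' true equilibrium strategies, with L = γ L_S R/θ_min. -/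
open scoped RealInnerProductSpace

lemma euclid_inner_eq {m : ℕ} (x y : EuclideanSpace ℝ (Fin m)) :
    ⟪x, y⟫ = ∑ i, x i * y i := by
  simp [PiLp.inner_apply, RCLike.inner_apply]
  exact Finset.sum_congr rfl fun i _ => mul_comm _ _

lemma euclid_norm_sq {m : ℕ} (x : EuclideanSpace ℝ (Fin m)) :
    ‖x‖ ^ 2 = ∑ i, (x i) ^ 2 := by
  rw [← real_inner_self_eq_norm_sq, euclid_inner_eq]
  simp [sq]

/-- Quantitative core of the hyper Nash equilibrium theorem: under the cognitive
threshold `‖d_true − d_ave‖ ≤ ε_c`, the human-driven vehicle's subjectively optimal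
strategy `s₀*` (a minimizer of its `γ`-Lipschitz cost `J₀` over the feasible set
`S₀(s')` induced by the equilibrium `s'` of the averaged-weights game) is an
`L ε_c`-approximate best response on the feasible set `S₀(s*)` induced by the
equilibrium `s*` of the true-weights game, with `L = γ L_S R / θmin`. -/
theorem hyperNash_perceptual_threshold {m : ℕ} (r : EuclideanSpace ℝ (Fin m))
    (θmin R εc : ℝ) (hθ : 0 < θmin) (hR : 0 ≤ R)
    (K : Set (EuclideanSpace ℝ (Fin m))) (hKne : K.Nonempty)
    (hK : K ⊆ Metric.closedBall r R)
    (dtrue dave : EuclideanSpace ℝ (Fin m))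
    (hdtrue : ∀ i, θmin ≤ dtrue i) (hdave : ∀ i, θmin ≤ dave i)
    (hεc : ‖dtrue - dave‖ ≤ εc)
    (sstar s' : EuclideanSpace ℝ (Fin m))
    (hsstar : VISol (Fdr dtrue r) K sstar) (hs' : VISol (Fdr dave r) K s')
    {H₀ : Type*} [MetricSpace H₀]
    (S₀ : EuclideanSpace ℝ (Fin m) → Set H₀)
    (hS₀ne : ∀ p, (S₀ p).Nonempty) (hS₀b : ∀ p, Bornology.IsBounded (S₀ p))
    (LS : ℝ) (hLS : 0 ≤ LS)
    (hS₀lip : ∀ p p', Metric.hausdorffDist (S₀ p) (S₀ p') ≤ LS * ‖p - p'‖)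
    (J₀ : H₀ → ℝ) (γ : ℝ) (hγ : 0 ≤ γ)
    (hJ₀lip : ∀ x y : H₀, |J₀ x - J₀ y| ≤ γ * dist x y)
    (s₀star : H₀) (hs₀mem : s₀star ∈ S₀ s')
    (hs₀min : J₀ s₀star = sInf (J₀ '' S₀ s')) :
    ∀ s₀ ∈ S₀ sstar, J₀ s₀star ≤ J₀ s₀ + γ * LS * (R / θmin) * εc := by
  have hεc0 : 0 ≤ εc := le_trans (norm_nonneg _) hεc
  obtain ⟨hsK, hsVI⟩ := hsstar
  obtain ⟨hs'K, hs'VI⟩ := hs'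
  set u : EuclideanSpace ℝ (Fin m) := sstar - s' with hu
  -- entrywise bound on s' - r
  have hs'R : ∀ i, (s' i - r i) ^ 2 ≤ R ^ 2 := by
    intro i
    have h1 : ‖s' - r‖ ≤ R := by
      simpa [Metric.mem_closedBall, dist_eq_norm] using hK hs'K
    have h2 : (s' i - r i) ^ 2 ≤ ‖s' - r‖ ^ 2 := by
      rw [euclid_norm_sq]
      have h := Finset.single_le_sum (f := fun j => ((s' - r) j) ^ 2)
        (fun j _ => sq_nonneg _) (Finset.mem_univ i)
      simpa using h
    have h3 : ‖s' - r‖ ^ 2 ≤ R ^ 2 := pow_le_pow_left₀ (norm_nonneg _) h1 2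
    linarith
  -- strong monotonicity chain
  have hA : ⟪Fdr dtrue r sstar, u⟫ ≤ 0 := by
    have h := hsVI s' hs'K
    rw [hu, ← neg_sub s' sstar, inner_neg_right]
    linarith
  have hB : (0:ℝ) ≤ ⟪Fdr dave r s', u⟫ := hs'VI sstar hsK
  have hstep : θmin * ‖u‖ ^ 2 ≤ ∑ i, dtrue i * (u i) ^ 2 := by
    rw [euclid_norm_sq, Finset.mul_sum]
    exact Finset.sum_le_sum fun i _ => mul_le_mul_of_nonneg_right (hdtrue i) (sq_nonneg _)
  have hsum : (∑ i, dtrue i * (u i) ^ 2) =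
      ⟪Fdr dtrue r sstar - Fdr dtrue r s', u⟫ := by
    rw [euclid_inner_eq]
    refine Finset.sum_congr rfl fun i _ => ?_
    have h1 : (Fdr dtrue r sstar - Fdr dtrue r s') i
        = dtrue i * (sstar i - r i) - dtrue i * (s' i - r i) := rfl
    have h2 : u i = sstar i - s' i := rfl
    rw [h1, h2]; ring
  have hCS : ⟪Fdr dave r s' - Fdr dtrue r s', u⟫
      ≤ ‖Fdr dave r s' - Fdr dtrue r s'‖ * ‖u‖ := real_inner_le_norm _ _
  have hEsq : ‖Fdr dave r s' - Fdr dtrue r s'‖ ^ 2 ≤ (εc * R) ^ 2 := by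
    rw [euclid_norm_sq]
    have h1 : ∀ i, ((Fdr dave r s' - Fdr dtrue r s') i) ^ 2
        ≤ (dave i - dtrue i) ^ 2 * R ^ 2 := by
      intro i
      have e : (Fdr dave r s' - Fdr dtrue r s') i
          = (dave i - dtrue i) * (s' i - r i) := by
        show dave i * (s' i - r i) - dtrue i * (s' i - r i)
          = (dave i - dtrue i) * (s' i - r i)
        ring
      rw [e, mul_pow]
      exact mul_le_mul_of_nonneg_left (hs'R i) (sq_nonneg _)
    calc (∑ i, ((Fdr dave r s' - Fdr dtrue r s') i) ^ 2)
        ≤ ∑ i, (dave i - dtrue i) ^ 2 * R ^ 2 :=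
          Finset.sum_le_sum fun i _ => h1 i
      _ = (∑ i, ((dave - dtrue) i) ^ 2) * R ^ 2 := by
          rw [Finset.sum_mul]; rfl
      _ = ‖dave - dtrue‖ ^ 2 * R ^ 2 := by rw [euclid_norm_sq]
      _ ≤ εc ^ 2 * R ^ 2 := by
          have : ‖dave - dtrue‖ ≤ εc := by rw [norm_sub_rev]; exact hεc
          gcongr
      _ = (εc * R) ^ 2 := by ring
  have hE : ‖Fdr dave r s' - Fdr dtrue r s'‖ ≤ εc * R :=
    (pow_le_pow_iff_left₀ (norm_nonneg _) (by positivity) two_ne_zero).mp hEsq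
  -- combine: θmin ‖u‖² ≤ εc R ‖u‖
  have hmain : θmin * ‖u‖ ^ 2 ≤ εc * R * ‖u‖ := by
    have h1 : ⟪Fdr dtrue r sstar - Fdr dtrue r s', u⟫
        = ⟪Fdr dtrue r sstar - Fdr dave r s', u⟫
          + ⟪Fdr dave r s' - Fdr dtrue r s', u⟫ := by
      rw [← inner_add_left, sub_add_sub_cancel]
    have h2 : ⟪Fdr dtrue r sstar - Fdr dave r s', u⟫ ≤ 0 := by
      rw [inner_sub_left]; linarith
    have h3 : ⟪Fdr dave r s' - Fdr dtrue r s', u⟫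
        ≤ εc * R * ‖u‖ :=
      hCS.trans (mul_le_mul_of_nonneg_right hE (norm_nonneg _))
    calc θmin * ‖u‖ ^ 2 ≤ ∑ i, dtrue i * (u i) ^ 2 := hstep
      _ = ⟪Fdr dtrue r sstar - Fdr dtrue r s', u⟫ := hsum
      _ ≤ ⟪Fdr dave r s' - Fdr dtrue r s', u⟫ := by rw [h1]; linarith
      _ ≤ εc * R * ‖u‖ := h3
  have key : ‖u‖ ≤ R / θmin * εc := by
    rcases eq_or_lt_of_le (norm_nonneg u) with h0 | h0
    · rw [← h0]; positivity
    · have h1 : θmin * ‖u‖ ≤ εc * R := by nlinarith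
      calc ‖u‖ ≤ εc * R / θmin := (le_div_iff₀ hθ).mpr (by linarith)
        _ = R / θmin * εc := by ring
  -- human-driven vehicle part
  intro s₀ hs₀
  refine le_of_forall_pos_le_add fun δ hδ => ?_
  have hfin : EMetric.hausdorffEdist (S₀ sstar) (S₀ s') ≠ ⊤ :=
    Metric.hausdorffEdist_ne_top_of_nonempty_of_bounded (hS₀ne _) (hS₀ne _)
      (hS₀b _) (hS₀b _)
  have hinf : Metric.infDist s₀ (S₀ s') ≤ LS * (R / θmin * εc) := by
    calc Metric.infDist s₀ (S₀ s')
        ≤ Metric.hausdorffDist (S₀ sstar) (S₀ s') :=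
          Metric.infDist_le_hausdorffDist_of_mem hs₀ hfin
      _ ≤ LS * ‖sstar - s'‖ := hS₀lip sstar s'
      _ ≤ LS * (R / θmin * εc) := mul_le_mul_of_nonneg_left key hLS
  have hγ1 : (0:ℝ) < γ + 1 := by linarith
  obtain ⟨y, hy, hyd⟩ := (Metric.infDist_lt_iff (hS₀ne s')).mp
    (lt_add_of_pos_right (Metric.infDist s₀ (S₀ s')) (show (0:ℝ) < δ / (γ + 1) by positivity))
  have hbdd : BddBelow (J₀ '' S₀ s') := by
    refine ⟨J₀ s₀star - γ * Metric.diam (S₀ s'), ?_⟩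
    rintro _ ⟨z, hz, rfl⟩
    have h1 := (abs_le.mp (hJ₀lip s₀star z)).2
    have h2 : dist s₀star z ≤ Metric.diam (S₀ s') :=
      Metric.dist_le_diam_of_mem (hS₀b s') hs₀mem hz
    have h3 : γ * dist s₀star z ≤ γ * Metric.diam (S₀ s') :=
      mul_le_mul_of_nonneg_left h2 hγ
    linarith
  have hmin : J₀ s₀star ≤ J₀ y := hs₀min ▸ csInf_le hbdd ⟨y, hy, rfl⟩
  have hlip : J₀ y ≤ J₀ s₀ + γ * dist s₀ y := by
    have := (abs_le.mp (hJ₀lip y s₀)).2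
    rw [dist_comm]; linarith
  have hd : γ * dist s₀ y ≤ γ * (Metric.infDist s₀ (S₀ s') + δ / (γ + 1)) :=
    mul_le_mul_of_nonneg_left hyd.le hγ
  have hδ2 : γ * (δ / (γ + 1)) ≤ δ := by
    calc γ * (δ / (γ + 1)) ≤ (γ + 1) * (δ / (γ + 1)) := by
          have : (0:ℝ) ≤ δ / (γ + 1) := by positivity
          nlinarith
      _ = δ := by field_simp
  have h5 : γ * (LS * (R / θmin * εc)) = γ * LS * (R / θmin) * εc := by ring
  have h6 : γ * Metric.infDist s₀ (S₀ s') ≤ γ * (LS * (R / θmin * εc)) :=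
    mul_le_mul_of_nonneg_left hinf hγ
  have h7 : γ * (Metric.infDist s₀ (S₀ s') + δ / (γ + 1))
      = γ * Metric.infDist s₀ (S₀ s') + γ * (δ / (γ + 1)) := by ring
  linarith
end
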